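/- Let R be a commutative semilocal zero-dimensional ring with Jacobson radical J. If for every sequence {I_i} of finitely generated ideals contained in J there exists k > 0 with I_1 I_2 ··· I_k = 0, then the nilradical of the total quotient ring of the polynomial ring S = R[X_1,...,X_n] is T-nilpotent. -/

import Mathlib

abbrev TotalQuotient (S : Type*) [CommRing S] := Localization (nonZeroDivisors S)

def IsSemilocal (S : Type*) [CommRing S] : Prop := {I : Ideal S | I.IsMaximal}.Finite

def IsZeroDimensional (S : Type*) [CommRing S] : Prop :=
  ∀ P : Ideal S, P.IsPrime → P.IsMaximal

/-- An ideal is T-nilpotent if every sequence of its elements has a vanishing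
finite initial product. -/
def IsTNilpotentIdeal {S : Type*} [CommRing S] (N : Ideal S) : Prop :=
  ∀ y : ℕ → S, (∀ i, y i ∈ N) → ∃ m, ∏ i ∈ Finset.range (m + 1), y i = 0

/-- A nilpotent multivariate polynomial has nilpotent coefficients. -/
lemma coeff_nilpotent_of_nilpotent {R : Type*} [CommRing R] {σ : Type*}
    {f : MvPolynomial σ R} (hf : IsNilpotent f) (m : σ →₀ ℕ) :
    IsNilpotent (f.coeff m) := by
  rw [← mem_nilradical, nilradical_eq_sInf, Ideal.mem_sInf]
  intro P hP
  have hP' : (P : Ideal R).IsPrime := hP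
  -- map to MvPolynomial σ (R ⧸ P), a domain
  let φ : MvPolynomial σ R →+* MvPolynomial σ (R ⧸ P) :=
    MvPolynomial.map (Ideal.Quotient.mk P)
  have : IsNilpotent (φ f) := hf.map φ
  have hzero : φ f = 0 := by
    obtain ⟨k, hk⟩ := this
    rcases Nat.eq_zero_or_pos k with h0 | h0
    · simp [h0] at hk
    · exact (pow_eq_zero_iff h0.ne').mp hk
  have := congrArg (fun g => MvPolynomial.coeff m g) hzero
  simpa [φ, MvPolynomial.coeff_map, Ideal.Quotient.eq_zero_iff_mem] using this

theorem stmt_4 {R : Type*} [CommRing R] (n : ℕ)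
    (hsemi : IsSemilocal R) (hzero : IsZeroDimensional R)
    (hJ : ∀ I : ℕ → Ideal R, (∀ i, (I i).FG) →
      (∀ i, I i ≤ (⊥ : Ideal R).jacobson) →
      ∃ k > 0, ∏ i ∈ Finset.range k, I i = ⊥) :
    IsTNilpotentIdeal (nilradical (TotalQuotient (MvPolynomial (Fin n) R))) := by
  classical
  intro y hy
  let S := MvPolynomial (Fin n) R
  let Q := TotalQuotient S
  have hsurj : ∀ i, ∃ p : S × (nonZeroDivisors S),
      y i = IsLocalization.mk' Q p.1 p.2 := by
    intro i
    obtain ⟨a, hab⟩ := IsLocalization.mk'_surjective (nonZeroDivisors S) (y i)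
    exact ⟨a, hab.symm⟩
  choose p hp using hsurj
  let f : ℕ → S := fun i => (p i).1
  let s : ℕ → nonZeroDivisors S := fun i => (p i).2
  have hinj : Function.Injective (algebraMap S Q) :=
    IsLocalization.injective Q (le_refl (nonZeroDivisors S))
  have hspec : ∀ i, y i * algebraMap S Q (s i) = algebraMap S Q (f i) := by
    intro i
    rw [hp i]
    exact IsLocalization.mk'_spec Q (f i) (s i)
  have hfnil : ∀ i, IsNilpotent (f i) := by
    intro i
    have h1 : IsNilpotent (y i * algebraMap S Q (s i)) :=
      (Commute.all _ _).isNilpotent_mul_right (mem_nilradical.mp (hy i))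
    rw [hspec i] at h1
    obtain ⟨k, hk⟩ := h1
    refine ⟨k, hinj ?_⟩
    rw [map_pow, map_zero]
    exact hk
  -- coefficient ideals
  let I : ℕ → Ideal R := fun i => Ideal.span ((f i).coeff '' ↑(f i).support)
  have hIfg : ∀ i, (I i).FG :=
    fun i => Submodule.fg_span (((f i).support.finite_toSet).image _)
  have hIle : ∀ i, I i ≤ (⊥ : Ideal R).jacobson := by
    intro i
    refine Ideal.span_le.mpr ?_
    rintro x ⟨m, _, rfl⟩
    exact Ideal.radical_le_jacobson (mem_nilradical.mpr
      (coeff_nilpotent_of_nilpotent (hfnil i) m))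
  obtain ⟨k, hk0, hkprod⟩ := hJ I hIfg hIle
  -- each f i lies in map C (I i)
  have hfmem : ∀ i, f i ∈ Ideal.map (MvPolynomial.C : R →+* S) (I i) := by
    intro i
    rw [MvPolynomial.mem_map_C_iff]
    intro m
    by_cases hm : m ∈ (f i).support
    · exact Ideal.subset_span ⟨m, hm, rfl⟩
    · rw [MvPolynomial.notMem_support_iff.mp hm]
      exact (I i).zero_mem
  have hprodf : ∏ i ∈ Finset.range k, f i = 0 := by
    have h1 : ∏ i ∈ Finset.range k, f i ∈
        ∏ i ∈ Finset.range k, Ideal.map (MvPolynomial.C : R →+* S) (I i) :=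
      Ideal.prod_mem_prod fun i _ => hfmem i
    have h2 : ∏ i ∈ Finset.range k, Ideal.map (MvPolynomial.C : R →+* S) (I i)
        = Ideal.map (MvPolynomial.C : R →+* S) (∏ i ∈ Finset.range k, I i) :=
      (map_prod (Ideal.mapHom (MvPolynomial.C : R →+* S)) _ _).symm
    rw [h2, hkprod, Ideal.map_bot, Ideal.mem_bot] at h1
    exact h1
  -- conclude
  refine ⟨k - 1, ?_⟩
  have hk1 : k - 1 + 1 = k := Nat.succ_pred_eq_of_pos hk0
  rw [hk1]
  have hu : IsUnit (algebraMap S Q (∏ i ∈ Finset.range k, (s i : S))) := by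
    have h3 : (∏ i ∈ Finset.range k, (s i : S)) =
        ((∏ i ∈ Finset.range k, s i : nonZeroDivisors S) : S) := by
      simp
    rw [h3]
    exact IsLocalization.map_units Q _
  rw [← IsUnit.mul_left_eq_zero hu]
  calc (∏ i ∈ Finset.range k, y i) * algebraMap S Q (∏ i ∈ Finset.range k, (s i : S))
      = ∏ i ∈ Finset.range k, (y i * algebraMap S Q (s i)) := by
        rw [map_prod, Finset.prod_mul_distrib]
    _ = ∏ i ∈ Finset.range k, algebraMap S Q (f i) := by
        exact Finset.prod_congr rfl fun i _ => hspec i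
    _ = algebraMap S Q (∏ i ∈ Finset.range k, f i) := (map_prod _ _ _).symm
    _ = 0 := by rw [hprodf, map_zero]
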